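/- Let t ≥ 2, let π_1,…,π_t be positive reals (strength parameters), let ν ≥ 0 (draw-propensity parameter), and let n > 0 (number of games between each pair in a balanced design). For each k define s_k = π_k · n · Σ_{i≠k} (1 + (ν/2)·√(π_i/π_k)) / (π_i + π_k + ν·√(π_i·π_k)). Then for all indices j, k: s_j − s_k = n·(√π_j − √π_k) · Σ_{i=1}^{t} [π_i·(√π_j + √π_k) + (ν/2)·√(π_i·π_j·π_k) + (ν/2)·π_i^{3/2}] / [(π_i + π_j + ν·√(π_i·π_j))·(π_i + π_k + ν·√(π_i·π_k))], and consequently s_j − s_k and π_j − π_k have the same sign (the Davidson model is consistent: in a balanced design, strength parameters respect the order of scores). -/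
import Mathlib


open Finset

/-- The Davidson model is consistent: in a balanced design the expected scores
respect the order of the strength parameters. -/
theorem davidson_consistency (t : ℕ) (ht : 2 ≤ t) (π : Fin t → ℝ)
    (hπ : ∀ i, 0 < π i) (ν : ℝ) (hν : 0 ≤ ν) (n : ℝ) (hn : 0 < n)
    (s : Fin t → ℝ)
    (hs : ∀ k, s k = π k * n * ∑ i ∈ Finset.univ.erase k,
      (1 + (ν / 2) * Real.sqrt (π i / π k)) /
        (π i + π k + ν * Real.sqrt (π i * π k))) :
    ∀ j k : Fin t,
      s j - s k = n * (Real.sqrt (π j) - Real.sqrt (π k)) *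
        ∑ i, (π i * (Real.sqrt (π j) + Real.sqrt (π k))
            + (ν / 2) * Real.sqrt (π i * π j * π k)
            + (ν / 2) * (π i * Real.sqrt (π i))) /
          ((π i + π j + ν * Real.sqrt (π i * π j)) *
            (π i + π k + ν * Real.sqrt (π i * π k)))
      ∧ (0 < s j - s k ↔ 0 < π j - π k)
      ∧ (s j - s k < 0 ↔ π j - π k < 0)
      ∧ (s j - s k = 0 ↔ π j - π k = 0) := by
  intro j k
  set q : Fin t → ℝ := fun i => Real.sqrt (π i) with hqdef
  have hq : ∀ i, 0 < q i := fun i => Real.sqrt_pos.2 (hπ i)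
  have hsq : ∀ i, π i = q i ^ 2 := fun i => (Real.sq_sqrt (hπ i).le).symm
  have hmul : ∀ i l, Real.sqrt (π i * π l) = q i * q l := fun i l =>
    Real.sqrt_mul (hπ i).le _
  have hmul3 : ∀ i, Real.sqrt (π i * π j * π k) = q i * q j * q k := fun i => by
    rw [Real.sqrt_mul (mul_nonneg (hπ i).le (hπ j).le), Real.sqrt_mul (hπ i).le]
  have hD : ∀ i l, 0 < π i + π l + ν * (q i * q l) := fun i l => by
    have h1 := hπ i; have h2 := hπ l
    have h3 : 0 ≤ ν * (q i * q l) :=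
      mul_nonneg hν (mul_nonneg (hq i).le (hq l).le)
    linarith
  set f : Fin t → Fin t → ℝ := fun l i =>
    (π l + ν / 2 * (q i * q l)) / (π i + π l + ν * (q i * q l)) with hfdef
  -- rewrite scores
  have key : ∀ l, s l = n * (∑ i, f l i - 1 / 2) := by
    intro l
    have h1 : ∀ i : Fin t, π l * ((1 + ν / 2 * Real.sqrt (π i / π l)) /
        (π i + π l + ν * Real.sqrt (π i * π l))) = f l i := by
      intro i
      have hd : Real.sqrt (π i / π l) = q i / q l := Real.sqrt_div (hπ i).le _
      rw [hd, hmul, hfdef, ← mul_div_assoc]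
      congr 1
      have hql := (hq l).ne'
      field_simp
      rw [hsq l]; ring
    have hfl : f l l = 1 / 2 := by
      have hden : (0:ℝ) < π l + π l + ν * (q l * q l) := hD l l
      rw [hfdef]
      rw [div_eq_iff hden.ne']
      have : q l * q l = π l := by rw [hsq l]; ring
      rw [this]; ring
    have hsum : ∑ i, f l i = f l l + ∑ i ∈ Finset.univ.erase l, f l i :=
      (Finset.add_sum_erase _ _ (Finset.mem_univ l)).symm
    rw [hs l, hsum, hfl]
    rw [mul_comm (π l) n, mul_assoc, Finset.mul_sum]
    simp only [h1]
    ring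
  -- difference of scores
  have hdiff : s j - s k = n * ∑ i, (f j i - f k i) := by
    rw [key j, key k, Finset.sum_sub_distrib]; ring
  set num : Fin t → ℝ := fun i =>
    π i * (q j + q k) + ν / 2 * (q i * q j * q k) + ν / 2 * (π i * q i) with hnumdef
  set D : Fin t → Fin t → ℝ := fun i l => π i + π l + ν * (q i * q l) with hDdef
  have hterm : ∀ i, f j i - f k i = (q j - q k) * (num i / (D i j * D i k)) := by
    intro i
    have hdj := (hD i j).ne'
    have hdk := (hD i k).ne'
    rw [hfdef, hnumdef, hDdef]
    rw [div_sub_div _ _ hdj hdk, mul_div_assoc' (q j - q k)]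
    congr 1
    simp only [hsq i, hsq j, hsq k]; ring
  have main : s j - s k = n * (q j - q k) * ∑ i, num i / (D i j * D i k) := by
    rw [hdiff]
    simp only [hterm]
    rw [← Finset.mul_sum]
    ring
  have hnum_pos : ∀ i, 0 < num i := by
    intro i
    have h1 : 0 < π i * (q j + q k) := mul_pos (hπ i) (add_pos (hq j) (hq k))
    have h2 : 0 ≤ ν / 2 * (q i * q j * q k) := by positivity
    have h3 : 0 ≤ ν / 2 * (π i * q i) := by
      have := (hπ i).le; have := (hq i).le; positivity
    rw [hnumdef]; dsimp only; linarith
  have hS : 0 < ∑ i, num i / (D i j * D i k) := by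
    have hne : (Finset.univ : Finset (Fin t)).Nonempty :=
      ⟨⟨0, by omega⟩, Finset.mem_univ _⟩
    refine Finset.sum_pos (fun i _ => ?_) hne
    exact div_pos (hnum_pos i) (mul_pos (hD i j) (hD i k))
  have hrw : s j - s k = (n * ∑ i, num i / (D i j * D i k)) * (q j - q k) := by
    rw [main]; ring
  have hnS : 0 < n * ∑ i, num i / (D i j * D i k) := mul_pos hn hS
  have hqiff : ∀ a b : Fin t, (q a < q b ↔ π a < π b) := by
    intro a b
    constructor
    · intro h
      by_contra hc
      push_neg at hc
      have := Real.sqrt_le_sqrt hc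
      simp only [hqdef] at h ⊢
      linarith [Real.sqrt_le_sqrt hc]
    · intro h
      exact Real.sqrt_lt_sqrt (hπ a).le h
  refine ⟨?_, ?_, ?_, ?_⟩
  · rw [main]
    simp only [hmul, hmul3, hDdef, hnumdef, hqdef]
  · rw [hrw]
    constructor
    · intro h
      have hqq : 0 < q j - q k := by
        rcases lt_trichotomy (q j - q k) 0 with h1 | h1 | h1
        · nlinarith
        · nlinarith
        · exact h1
      have : q k < q j := by linarith
      have := (hqiff k j).1 this
      linarith
    · intro h
      have : q k < q j := (hqiff k j).2 (by linarith)
      nlinarith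
  · rw [hrw]
    constructor
    · intro h
      have hqq : q j - q k < 0 := by
        rcases lt_trichotomy (q j - q k) 0 with h1 | h1 | h1
        · exact h1
        · nlinarith
        · nlinarith
      have := (hqiff j k).1 (by linarith)
      linarith
    · intro h
      have : q j < q k := (hqiff j k).2 (by linarith)
      nlinarith
  · rw [hrw]
    constructor
    · intro h
      have hqq : q j - q k = 0 := by
        rcases lt_trichotomy (q j - q k) 0 with h1 | h1 | h1
        · nlinarith
        · exact h1
        · nlinarith
      have hq1 : ¬ π j < π k := fun hc => by
        have := (hqiff j k).2 hc; linarith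
      have hq2 : ¬ π k < π j := fun hc => by
        have := (hqiff k j).2 hc; linarith
      push_neg at hq1 hq2
      linarith
    · intro h
      have hjk : π j = π k := by linarith
      have : q j = q k := by simp only [hqdef, hjk]
      rw [this]
      ring
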